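/- arXiv:1506.07158 — 2 statements merged into one kernel-verified Lean document; each statement's English description precedes it below -/
import Mathlib

section
/- Let S, Y₁, …, Y_K be independent nonnegative random variables with S ~ Gamma(m₀, β₀) for integer m₀ ≥ 1 and β₀ > 0. Then P[S > σ² + Σ_{i=1}^K Y_i] = e^{−β₀σ²} Σ_{ℓ=0}^{m₀−1} ((β₀σ²)^ℓ/ℓ!) Σ_{t=0}^{ℓ} C(ℓ,t) (t!/σ^{2t}) Σ_{(t₁,…,t_K): Σt_i = t} ∏_{i=1}^K E[(Y_i^{t_i}/t_i!) e^{−β₀ Y_i}]. -/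
open Real MeasureTheory ProbabilityTheory

section Aux

open Set Filter Finset Topology

lemma myIntegrableOn_pow_mul_exp (n : ℕ) {β : ℝ} (hβ : 0 < β) {t : ℝ} (ht : 0 ≤ t) :
    IntegrableOn (fun s : ℝ => s ^ n * Real.exp (-β * s)) (Set.Ioi t) := by
  have h := integrableOn_rpow_mul_exp_neg_mul_rpow (p := 1) (s := (n : ℝ)) (b := β)
    (by exact neg_one_lt_zero.trans_le (Nat.cast_nonneg n)) zero_lt_one hβ
  have h2 : IntegrableOn (fun x : ℝ => x ^ (n : ℝ) * Real.exp (-β * x ^ (1:ℝ))) (Set.Ioi t) :=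
    h.mono_set (Set.Ioi_subset_Ioi ht)
  refine h2.congr_fun (fun x _ => ?_) measurableSet_Ioi
  simp only [Real.rpow_natCast, Real.rpow_one]

lemma gamma_tail_integral {n : ℕ} {β : ℝ} (hβ : 0 < β) {t : ℝ} (ht : 0 ≤ t) :
    ∫ s in Set.Ioi t, β ^ (n+1) * s ^ n * Real.exp (-β * s) / (Nat.factorial n) =
      Real.exp (-β * t) * ∑ ℓ ∈ Finset.range (n+1), (β * t) ^ ℓ / (Nat.factorial ℓ) := by
  set F : ℝ → ℝ := fun x => -(Real.exp (-β * x) * ∑ ℓ ∈ Finset.range (n+1),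
    (β * x) ^ ℓ / (Nat.factorial ℓ)) with hF
  have hderiv : ∀ x : ℝ, HasDerivAt F (β ^ (n+1) * x ^ n * Real.exp (-β * x) / n.factorial) x := by
    intro x
    have hE : HasDerivAt (fun x => ∑ ℓ ∈ Finset.range (n+1), (β * x) ^ ℓ / (Nat.factorial ℓ))
        (β * ∑ ℓ ∈ Finset.range n, (β * x) ^ ℓ / (Nat.factorial ℓ)) x := by
      have : HasDerivAt (fun x => ∑ ℓ ∈ Finset.range (n+1), (β * x) ^ ℓ / (Nat.factorial ℓ))
          (∑ ℓ ∈ Finset.range (n+1), (ℓ : ℝ) * (β * x) ^ (ℓ - 1) * β / (Nat.factorial ℓ)) x := by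
        refine HasDerivAt.fun_sum (fun ℓ _ => ?_)
        have h1 : HasDerivAt (fun x : ℝ => β * x) β x := by
          simpa using (hasDerivAt_id x).const_mul β
        exact (h1.pow ℓ).div_const _
      convert this using 1
      rw [Finset.sum_range_succ']
      simp only [Nat.cast_zero, zero_mul, Nat.factorial_zero, Nat.cast_one, div_one, add_zero,
        Nat.add_sub_cancel, Finset.mul_sum]
      refine Finset.sum_congr rfl (fun i _ => ?_)
      rw [Nat.factorial_succ]
      have hi : ((i : ℝ) + 1) ≠ 0 := by positivity
      push_cast
      field_simp
    have hexp : HasDerivAt (fun x : ℝ => Real.exp (-β * x)) (Real.exp (-β * x) * (-β)) x := by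
      have h1 : HasDerivAt (fun x : ℝ => -β * x) (-β) x := by
        simpa using (hasDerivAt_id x).const_mul (-β)
      exact h1.exp
    have := (hexp.mul hE).neg
    refine this.congr_deriv ?_
    rw [Finset.sum_range_succ]
    field_simp
    ring
  have hcont : ContinuousWithinAt F (Set.Ici t) t := (hderiv t).continuousAt.continuousWithinAt
  have hint : IntegrableOn (fun x => β ^ (n+1) * x ^ n * Real.exp (-β * x) / n.factorial)
      (Set.Ioi t) := by
    have h0 : IntegrableOn (fun x : ℝ => β ^ (n+1) / n.factorial * (x ^ n * Real.exp (-β * x)))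
        (Set.Ioi t) := (myIntegrableOn_pow_mul_exp n hβ ht).const_mul (β ^ (n+1) / n.factorial)
    refine h0.congr_fun (fun x _ => ?_) measurableSet_Ioi
    ring
  have htend : Tendsto F atTop (𝓝 0) := by
    rw [show (0:ℝ) = -0 by ring]
    refine Tendsto.neg ?_
    have : Tendsto (fun x => ∑ ℓ ∈ Finset.range (n+1),
        (β * x) ^ ℓ * Real.exp (-β * x) / (Nat.factorial ℓ)) atTop
        (𝓝 (∑ ℓ ∈ Finset.range (n+1), 0)) := by
      refine tendsto_finset_sum _ (fun ℓ _ => ?_)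
      have h1 : Tendsto (fun x : ℝ => β * x) atTop atTop :=
        Tendsto.const_mul_atTop hβ tendsto_id
      have h2 := (tendsto_pow_mul_exp_neg_atTop_nhds_zero ℓ).comp h1
      have h3 : Tendsto (fun x : ℝ => (β * x) ^ ℓ * Real.exp (-β * x)) atTop (𝓝 0) := by
        refine h2.congr (fun x => ?_)
        simp [Function.comp, neg_mul]
      simpa using h3.div_const (Nat.factorial ℓ : ℝ)
    simp only [Finset.sum_const_zero] at this
    refine this.congr (fun x => ?_)
    rw [Finset.mul_sum]
    refine Finset.sum_congr rfl (fun ℓ _ => ?_)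
    ring
  have := integral_Ioi_of_hasDerivAt_of_tendsto hcont (fun x _ => hderiv x) hint htend
  rw [this, hF]
  ring


lemma antidiagonalTuple_eq_piAntidiag (K t : ℕ) :
    Finset.Nat.antidiagonalTuple K t = Finset.piAntidiag Finset.univ t := by
  ext x
  simp [Finset.Nat.mem_antidiagonalTuple]

lemma expand_W {K : ℕ} (β₀ : ℝ) (y : Fin K → ℝ) (t : ℕ) :
    (∑ i, y i) ^ t * Real.exp (-β₀ * ∑ i, y i) =
      ∑ ts ∈ Finset.Nat.antidiagonalTuple K t, (t.factorial : ℝ) *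
        ∏ i, (y i ^ ts i / (Nat.factorial (ts i) : ℝ) * Real.exp (-β₀ * y i)) := by
  rw [antidiagonalTuple_eq_piAntidiag, Finset.sum_pow_eq_sum_piAntidiag, Finset.sum_mul]
  refine Finset.sum_congr rfl (fun ts hts => ?_)
  rw [Finset.mem_piAntidiag] at hts
  obtain ⟨hsum, -⟩ := hts
  have hexp : Real.exp (-β₀ * ∑ i, y i) = ∏ i, Real.exp (-β₀ * y i) := by
    rw [Finset.mul_sum, Real.exp_sum]
  rw [hexp, Finset.prod_mul_distrib]
  have hprod : ∏ i, (y i ^ ts i / (Nat.factorial (ts i) : ℝ)) =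
      (∏ i, y i ^ ts i) / ∏ i, (Nat.factorial (ts i) : ℝ) := by
    rw [Finset.prod_div_distrib]
  rw [hprod]
  have hspec : (∏ i, (Nat.factorial (ts i) : ℝ)) * (Nat.multinomial Finset.univ ts : ℝ)
      = (t.factorial : ℝ) := by
    rw [← Nat.cast_prod, ← Nat.cast_mul, Nat.multinomial_spec, hsum]
  have hne : (∏ i, (Nat.factorial (ts i) : ℝ)) ≠ 0 :=
    Finset.prod_ne_zero_iff.2 (fun i _ => Nat.cast_ne_zero.2 (Nat.factorial_ne_zero _))
  have hM : (Nat.multinomial Finset.univ ts : ℝ) =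
      (t.factorial : ℝ) / ∏ i, (Nat.factorial (ts i) : ℝ) := by
    rw [eq_div_iff hne]; linear_combination hspec
  rw [hM]
  field_simp


lemma expand_g {K : ℕ} (m₀ : ℕ) {β₀ σ2 : ℝ} (hβ : 0 < β₀) (hσ : 0 < σ2) (y : Fin K → ℝ) :
    Real.exp (-β₀ * (σ2 + ∑ i, y i)) *
      ∑ ℓ ∈ Finset.range m₀, (β₀ * (σ2 + ∑ i, y i)) ^ ℓ / (Nat.factorial ℓ) =
    ∑ ℓ ∈ Finset.range m₀, ∑ t ∈ Finset.range (ℓ + 1),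
      ∑ ts ∈ Finset.Nat.antidiagonalTuple K t,
        (Real.exp (-β₀ * σ2) * ((β₀ * σ2) ^ ℓ / (Nat.factorial ℓ)) * (ℓ.choose t : ℝ) *
          ((Nat.factorial t : ℝ) / σ2 ^ t)) *
        ∏ i, (y i ^ ts i / (Nat.factorial (ts i) : ℝ) * Real.exp (-β₀ * y i)) := by
  rw [Finset.mul_sum]
  refine Finset.sum_congr rfl (fun ℓ _ => ?_)
  have hsplit : Real.exp (-β₀ * (σ2 + ∑ i, y i)) =
      Real.exp (-β₀ * σ2) * Real.exp (-β₀ * ∑ i, y i) := by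
    rw [← Real.exp_add]; ring_nf
  rw [hsplit, show β₀ * (σ2 + ∑ i, y i) = β₀ * (∑ i, y i) + β₀ * σ2 by ring, add_pow,
    Finset.sum_div, Finset.mul_sum]
  refine Finset.sum_congr rfl (fun t ht => ?_)
  rw [Finset.mem_range] at ht
  have ht' : t ≤ ℓ := Nat.lt_succ_iff.mp ht
  -- bring in expand_W
  have hW := expand_W β₀ y t
  have lhs_eq : Real.exp (-β₀ * σ2) * Real.exp (-β₀ * ∑ i, y i) *
      ((β₀ * ∑ i, y i) ^ t * (β₀ * σ2) ^ (ℓ - t) * (ℓ.choose t : ℝ) / (Nat.factorial ℓ)) =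
      (Real.exp (-β₀ * σ2) * β₀ ^ t * (β₀ * σ2) ^ (ℓ - t) * (ℓ.choose t : ℝ) /
        (Nat.factorial ℓ)) * ((∑ i, y i) ^ t * Real.exp (-β₀ * ∑ i, y i)) := by
    rw [mul_pow]; ring
  rw [lhs_eq, hW, Finset.mul_sum]
  refine Finset.sum_congr rfl (fun ts _ => ?_)
  have hcoef : Real.exp (-β₀ * σ2) * β₀ ^ t * (β₀ * σ2) ^ (ℓ - t) * (ℓ.choose t : ℝ) /
        (Nat.factorial ℓ) * (t.factorial : ℝ) =
      Real.exp (-β₀ * σ2) * ((β₀ * σ2) ^ ℓ / (Nat.factorial ℓ)) * (ℓ.choose t : ℝ) *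
        ((Nat.factorial t : ℝ) / σ2 ^ t) := by
    have h1 : (β₀ * σ2) ^ (ℓ - t) = (β₀ * σ2) ^ ℓ / (β₀ * σ2) ^ t := by
      rw [pow_sub₀ _ (by positivity) ht', div_eq_mul_inv]
    rw [h1, mul_pow]
    have hβ0 : β₀ ≠ 0 := ne_of_gt hβ
    field_simp
    ring
  rw [← mul_assoc, hcoef]


section Indep

variable {Ω : Type*} [MeasurableSpace Ω] {μ : Measure Ω}


variable {Ω : Type*} [MeasurableSpace Ω] {μ : Measure Ω}

lemma iIndep_tail {K : ℕ} {S : Ω → ℝ} {Y : Fin K → Ω → ℝ}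
    (hindep : iIndepFun (Fin.cons S Y : Fin (K + 1) → Ω → ℝ) μ) :
    iIndepFun Y μ := by
  rw [iIndepFun_iff_measure_inter_preimage_eq_mul] at hindep ⊢
  intro s sets H
  have h := hindep (s.map (Fin.succEmb K))
    (sets := (Fin.cons Set.univ sets : Fin (K+1) → Set ℝ))
    (fun i hi => by
      obtain ⟨j, hj, rfl⟩ := Finset.mem_map.mp hi
      simpa [Fin.succEmb] using H j hj)
  have h1 : (⋂ i ∈ s.map (Fin.succEmb K),
      (Fin.cons S Y : Fin (K+1) → Ω → ℝ) i ⁻¹' (Fin.cons Set.univ sets : Fin (K+1) → Set ℝ) i) =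
      ⋂ j ∈ s, Y j ⁻¹' sets j := by
    ext ω
    simp [Fin.succEmb, Fin.cons_succ]
  have h2 : (∏ i ∈ s.map (Fin.succEmb K),
      μ ((Fin.cons S Y : Fin (K+1) → Ω → ℝ) i ⁻¹' (Fin.cons Set.univ sets : Fin (K+1) → Set ℝ) i)) =
      ∏ j ∈ s, μ (Y j ⁻¹' sets j) := by
    rw [Finset.prod_map]
    refine Finset.prod_congr rfl (fun j _ => ?_)
    simp [Fin.succEmb, Fin.cons_succ]
  rw [h1, h2] at h
  exact h

lemma indep_T_S {K : ℕ} {S : Ω → ℝ} {Y : Fin K → Ω → ℝ}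
    (hmeasS : Measurable S) (hmeasY : ∀ i, Measurable (Y i)) (σ2 : ℝ)
    (hindep : iIndepFun (Fin.cons S Y : Fin (K + 1) → Ω → ℝ) μ) :
    IndepFun (fun ω => σ2 + ∑ i, Y i ω) S μ := by
  have hmeas : ∀ i, Measurable ((Fin.cons S Y : Fin (K+1) → Ω → ℝ) i) := fun i =>
    Fin.cases hmeasS hmeasY i
  have h := hindep.indepFun_finset_sum_of_notMem hmeas
    (s := Finset.univ.map (Fin.succEmb K)) (i := 0)
    (by simp [Fin.succEmb, Fin.succ_ne_zero])
  have hsum : (∑ j ∈ Finset.univ.map (Fin.succEmb K), (Fin.cons S Y : Fin (K+1) → Ω → ℝ) j)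
      = fun ω => ∑ i, Y i ω := by
    rw [Finset.sum_map]
    ext ω
    simp [Fin.succEmb, Fin.cons_succ, Finset.sum_apply]
  rw [hsum] at h
  have h2 : IndepFun (fun ω => ∑ i, Y i ω) S μ := by simpa [Fin.cons_zero] using h
  have := h2.comp (φ := fun x : ℝ => σ2 + x) (ψ := id) (measurable_const.add measurable_id)
    measurable_id
  exact this

lemma integral_prod_indep {K : ℕ} [IsProbabilityMeasure μ] {Z : Fin K → Ω → ℝ}
    (hindep : iIndepFun Z μ)
    (hmeas : ∀ i, Measurable (Z i)) (hint : ∀ i, Integrable (Z i) μ) (s : Finset (Fin K)) :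
    Integrable (fun ω => ∏ i ∈ s, Z i ω) μ ∧
      ∫ ω, ∏ i ∈ s, Z i ω ∂μ = ∏ i ∈ s, ∫ ω, Z i ω ∂μ := by
  classical
  induction s using Finset.cons_induction with
  | empty => simp
  | cons a s ha ih =>
    obtain ⟨ih1, ih2⟩ := ih
    have hPind : IndepFun (∏ j ∈ s, Z j) (Z a) μ :=
      hindep.indepFun_finset_prod_of_notMem hmeas ha
    have hP : (∏ j ∈ s, Z j) = fun ω => ∏ j ∈ s, Z j ω := by
      ext ω; simp [Finset.prod_apply]
    have hPind' : IndepFun (fun ω => ∏ j ∈ s, Z j ω) (Z a) μ := by rwa [hP] at hPind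
    have hint2 : Integrable (fun ω => (∏ j ∈ s, Z j ω) * Z a ω) μ :=
      hPind'.integrable_mul ih1 (hint a)
    constructor
    · refine hint2.congr (Filter.Eventually.of_forall fun ω => ?_)
      simp only [Finset.prod_cons]; ring
    · have hmul := hPind'.integral_mul_eq_mul_integral ih1.1 (hint a).1
      calc ∫ ω, ∏ i ∈ Finset.cons a s ha, Z i ω ∂μ
          = ∫ ω, (∏ j ∈ s, Z j ω) * Z a ω ∂μ := by
            refine integral_congr_ae (Filter.Eventually.of_forall fun ω => ?_)
            simp only [Finset.prod_cons]; ring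
        _ = (∫ ω, ∏ j ∈ s, Z j ω ∂μ) * ∫ ω, Z a ω ∂μ := by simpa using hmul
        _ = ∏ i ∈ Finset.cons a s ha, ∫ ω, Z i ω ∂μ := by
            rw [Finset.prod_cons, ih2]; ring


end Indep

end Aux

/-- coverage probability of a Gamma-distributed signal over noise plus a sum of
independent nonnegative interference terms, in product form. -/
theorem coverage_probability_product_form
    {Ω : Type*} [MeasurableSpace Ω] (μ : Measure Ω) [IsProbabilityMeasure μ]
    (K m₀ : ℕ) (hm : 1 ≤ m₀) (β₀ σ2 : ℝ) (hβ : 0 < β₀) (hσ : 0 < σ2)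
    (S : Ω → ℝ) (Y : Fin K → Ω → ℝ)
    (hmeasS : Measurable S) (hmeasY : ∀ i, Measurable (Y i))
    (hindep : iIndepFun (Fin.cons S Y : Fin (K + 1) → Ω → ℝ) μ)
    (hSpdf : Measure.map S μ = volume.withDensity (fun s => ENNReal.ofReal
      (if 0 ≤ s then β₀ ^ m₀ * s ^ (m₀ - 1) * Real.exp (-β₀ * s) / (Nat.factorial (m₀ - 1))
       else 0)))
    (hYnonneg : ∀ i ω, 0 ≤ Y i ω)
    (hYmom : ∀ i (n : ℕ), Integrable (fun ω => (Y i ω) ^ n) μ) :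
    (μ {ω | σ2 + ∑ i, Y i ω < S ω}).toReal =
      Real.exp (-β₀ * σ2) * ∑ ℓ ∈ Finset.range m₀, (β₀ * σ2) ^ ℓ / (Nat.factorial ℓ) *
        ∑ t ∈ Finset.range (ℓ + 1), (ℓ.choose t : ℝ) * ((Nat.factorial t : ℝ) / σ2 ^ t) *
          ∑ ts ∈ Finset.Nat.antidiagonalTuple K t,
            ∏ i, ∫ ω, ((Y i ω) ^ ts i / (Nat.factorial (ts i) : ℝ)) *
              Real.exp (-β₀ * Y i ω) ∂μ := by
  classical
  obtain ⟨n, rfl⟩ : ∃ n, m₀ = n + 1 := ⟨m₀ - 1, (Nat.succ_pred_eq_of_pos hm).symm⟩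
  simp only [Nat.add_sub_cancel] at hSpdf
  set W : Ω → ℝ := fun ω => ∑ i, Y i ω with hWdef
  have hWmeas : Measurable W := Finset.measurable_sum _ (fun i _ => hmeasY i)
  set T : Ω → ℝ := fun ω => σ2 + W ω with hTdef
  have hTmeas : Measurable T := measurable_const.add hWmeas
  have hW0 : ∀ ω, 0 ≤ W ω := fun ω => Finset.sum_nonneg (fun i _ => hYnonneg i ω)
  have hT0 : ∀ ω, 0 ≤ T ω := fun ω => le_trans hσ.le (le_add_of_nonneg_right (hW0 ω))
  set g : ℝ → ℝ := fun x => Real.exp (-β₀ * x) *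
    ∑ ℓ ∈ Finset.range (n+1), (β₀ * x) ^ ℓ / (Nat.factorial ℓ) with hgdef
  have hgmeas : Measurable g := by
    refine ((measurable_id.const_mul (-β₀)).exp).mul ?_
    exact Finset.measurable_sum _ (fun ℓ _ =>
      ((measurable_id.const_mul β₀).pow_const ℓ).div_const _)
  have hg0 : ∀ x, 0 ≤ x → 0 ≤ g x := by
    intro x hx
    refine mul_nonneg (Real.exp_nonneg _) (Finset.sum_nonneg (fun ℓ _ => ?_))
    exact div_nonneg (pow_nonneg (mul_nonneg hβ.le hx) _) (Nat.cast_nonneg _)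
  -- the tail of the law of S
  have htail : ∀ x : ℝ, 0 ≤ x → Measure.map S μ (Set.Ioi x) = ENNReal.ofReal (g x) := by
    intro x hx
    rw [hSpdf, withDensity_apply _ measurableSet_Ioi]
    have h1 : ∫⁻ s in Set.Ioi x, ENNReal.ofReal
        (if 0 ≤ s then β₀ ^ (n+1) * s ^ n * Real.exp (-β₀ * s) / (Nat.factorial n) else 0)
        = ∫⁻ s in Set.Ioi x, ENNReal.ofReal
        (β₀ ^ (n+1) * s ^ n * Real.exp (-β₀ * s) / (Nat.factorial n)) := by
      refine setLIntegral_congr_fun_ae measurableSet_Ioi (ae_of_all _ (fun s hs => ?_))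
      rw [if_pos (le_of_lt (lt_of_le_of_lt hx hs))]
    rw [h1]
    have hint : IntegrableOn (fun s => β₀ ^ (n+1) * s ^ n * Real.exp (-β₀ * s) /
        (Nat.factorial n)) (Set.Ioi x) := by
      have h0 : IntegrableOn (fun s : ℝ => β₀ ^ (n+1) / (Nat.factorial n) *
          (s ^ n * Real.exp (-β₀ * s))) (Set.Ioi x) :=
        (myIntegrableOn_pow_mul_exp n hβ hx).const_mul _
      refine h0.congr_fun (fun s _ => ?_) measurableSet_Ioi
      ring
    rw [← ofReal_integral_eq_lintegral_ofReal hint ((ae_restrict_iff' measurableSet_Ioi).2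
      (ae_of_all _ (fun s hs => by
        have hs0 : (0:ℝ) ≤ s := le_of_lt (lt_of_le_of_lt hx hs)
        exact div_nonneg (mul_nonneg (mul_nonneg (pow_nonneg hβ.le _) (pow_nonneg hs0 _))
          (Real.exp_nonneg _)) (Nat.cast_nonneg _))))]
    rw [gamma_tail_integral hβ hx]
  -- rewrite the probability as a lintegral
  have hTS : IndepFun T S μ := indep_T_S hmeasS hmeasY σ2 hindep
  have hmapeq := (indepFun_iff_map_prod_eq_prod_map_map hTmeas.aemeasurable
    hmeasS.aemeasurable).mp hTS
  have hkey : μ {ω | T ω < S ω} = ∫⁻ ω, ENNReal.ofReal (g (T ω)) ∂μ := by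
    have hmlt : MeasurableSet {p : ℝ × ℝ | p.1 < p.2} :=
      measurableSet_lt measurable_fst measurable_snd
    have h1 : μ {ω | T ω < S ω} =
        Measure.map (fun ω => (T ω, S ω)) μ {p : ℝ × ℝ | p.1 < p.2} := by
      rw [Measure.map_apply (hTmeas.prodMk hmeasS) hmlt]
      rfl
    rw [h1, hmapeq, Measure.prod_apply hmlt]
    have h2 : ∀ x : ℝ, (Prod.mk x ⁻¹' {p : ℝ × ℝ | p.1 < p.2}) = Set.Ioi x := fun x => rfl
    simp only [h2]
    have hae : ∀ᵐ x ∂(Measure.map T μ), 0 ≤ x := by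
      rw [ae_map_iff hTmeas.aemeasurable measurableSet_Ici]
      exact ae_of_all _ hT0
    rw [lintegral_congr_ae (hae.mono (fun x hx => htail x hx)),
      lintegral_map hgmeas.ennreal_ofReal hTmeas]
  have hToReal : (μ {ω | T ω < S ω}).toReal = ∫ ω, g (T ω) ∂μ := by
    rw [hkey, ← integral_eq_lintegral_of_nonneg_ae (ae_of_all _ (fun ω => hg0 _ (hT0 ω)))
      ((hgmeas.comp hTmeas).aestronglyMeasurable)]
  -- componentwise integrability and product formula
  have hZ : ∀ ts : Fin K → ℕ,
      Integrable (fun ω => ∏ i, (Y i ω ^ ts i / (Nat.factorial (ts i) : ℝ) *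
        Real.exp (-β₀ * Y i ω))) μ ∧
      ∫ ω, ∏ i, (Y i ω ^ ts i / (Nat.factorial (ts i) : ℝ) * Real.exp (-β₀ * Y i ω)) ∂μ =
        ∏ i, ∫ ω, Y i ω ^ ts i / (Nat.factorial (ts i) : ℝ) * Real.exp (-β₀ * Y i ω) ∂μ := by
    intro ts
    set Z : Fin K → Ω → ℝ := fun i ω => Y i ω ^ ts i / (Nat.factorial (ts i) : ℝ) *
      Real.exp (-β₀ * Y i ω) with hZdef
    have hφmeas : ∀ i, Measurable (fun y : ℝ => y ^ ts i / (Nat.factorial (ts i) : ℝ) *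
        Real.exp (-β₀ * y)) := fun i =>
      ((measurable_id.pow_const _).div_const _).mul ((measurable_id.const_mul (-β₀)).exp)
    have hZmeas : ∀ i, Measurable (Z i) := fun i => (hφmeas i).comp (hmeasY i)
    have hZindep : iIndepFun Z μ :=
      (iIndep_tail hindep).comp _ hφmeas
    have hZint : ∀ i, Integrable (Z i) μ := by
      intro i
      have hbound : ∀ ω, ‖Z i ω‖ ≤ ‖Y i ω ^ ts i / (Nat.factorial (ts i) : ℝ)‖ := by
        intro ω
        have hA : 0 ≤ Y i ω ^ ts i / (Nat.factorial (ts i) : ℝ) :=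
          div_nonneg (pow_nonneg (hYnonneg i ω) _) (Nat.cast_nonneg _)
        have hE : Real.exp (-β₀ * Y i ω) ≤ 1 := by
          rw [Real.exp_le_one_iff]
          have := mul_nonneg hβ.le (hYnonneg i ω)
          linarith
        rw [Real.norm_eq_abs, Real.norm_eq_abs, abs_of_nonneg hA,
          abs_of_nonneg (mul_nonneg hA (Real.exp_nonneg _))]
        exact mul_le_of_le_one_right hA hE
      exact Integrable.mono ((hYmom i (ts i)).div_const _)
        (hZmeas i).aestronglyMeasurable (ae_of_all _ hbound)
    exact integral_prod_indep hZindep hZmeas hZint Finset.univ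
  -- put everything together
  rw [show {ω | σ2 + ∑ i, Y i ω < S ω} = {ω | T ω < S ω} from rfl, hToReal]
  have hexpand : ∀ ω, g (T ω) =
      ∑ ℓ ∈ Finset.range (n+1), ∑ t ∈ Finset.range (ℓ + 1),
        ∑ ts ∈ Finset.Nat.antidiagonalTuple K t,
          (Real.exp (-β₀ * σ2) * ((β₀ * σ2) ^ ℓ / (Nat.factorial ℓ)) * (ℓ.choose t : ℝ) *
            ((Nat.factorial t : ℝ) / σ2 ^ t)) *
          ∏ i, (Y i ω ^ ts i / (Nat.factorial (ts i) : ℝ) * Real.exp (-β₀ * Y i ω)) :=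
    fun ω => expand_g (n+1) hβ hσ (fun i => Y i ω)
  rw [integral_congr_ae (ae_of_all _ hexpand)]
  have hintts : ∀ (c : ℝ) (ts : Fin K → ℕ), Integrable (fun ω => c *
      ∏ i, (Y i ω ^ ts i / (Nat.factorial (ts i) : ℝ) * Real.exp (-β₀ * Y i ω))) μ :=
    fun c ts => ((hZ ts).1).const_mul c
  rw [integral_finset_sum _ (fun ℓ _ => integrable_finset_sum _ (fun t _ =>
    integrable_finset_sum _ (fun ts _ => hintts _ ts)))]
  simp only [Finset.mul_sum]
  refine Finset.sum_congr rfl (fun ℓ _ => ?_)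
  rw [integral_finset_sum _ (fun t _ => integrable_finset_sum _ (fun ts _ => hintts _ ts))]
  refine Finset.sum_congr rfl (fun t _ => ?_)
  rw [integral_finset_sum _ (fun ts _ => hintts _ ts)]
  refine Finset.sum_congr rfl (fun ts _ => ?_)
  rw [integral_const_mul, (hZ ts).2]
  ring
end

section
/- Consider points uniformly distributed on the annulus A with radii r_in < r_out, and a transmitter at distance r from the origin with r_in ≤ r ≤ r_out − W/2. The blocking region (the set of centers B such that a disk of diameter W centered at B intersects the open segment from the origin-point's receiver to the transmitter, restricted to A and excluding the inner disk of radius r_in) has area rW + πW²/8 − μ, where μ = (W/2)√(r_in² − (W/2)²) + r_in² arcsin(W/(2 r_in)). -/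
set_option maxHeartbeats 1000000

open Real MeasureTheory Set

/-- area of the blocking region for a transmitter at distance `r` with
`r_in ≤ r ≤ r_out − W/2`: the rectangle `r × W` around the line-of-sight segment, plus the
half-disk cap of radius `W/2` at the transmitter, minus the lens-shaped overlap with the
central disk of radius `r_in`, has area `rW + πW²/8 − μ` with
`μ = (W/2)√(r_in² − (W/2)²) + r_in² arcsin(W/(2 r_in))`. -/
theorem blocking_region_area (rin rout W r : ℝ)
    (h0 : 0 < rin) (h1 : rin < rout) (hW : 0 < W) (hW2 : W < 2 * rin)
    (hr : rin ≤ r) (hr2 : r ≤ rout - W / 2) :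
    volume ((({p : ℝ × ℝ | 0 ≤ p.1 ∧ p.1 ≤ r ∧ |p.2| ≤ W / 2} ∪
        {p : ℝ × ℝ | (p.1 - r) ^ 2 + p.2 ^ 2 ≤ (W / 2) ^ 2 ∧ r ≤ p.1}) \
        {p : ℝ × ℝ | p.1 ^ 2 + p.2 ^ 2 ≤ rin ^ 2})) =
      ENNReal.ofReal (r * W + π * W ^ 2 / 8 -
        ((W / 2) * Real.sqrt (rin ^ 2 - (W / 2) ^ 2) +
          rin ^ 2 * Real.arcsin (W / (2 * rin)))) := by
  have ha : 0 < W / 2 := by linarith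
  have harin : W / 2 < rin := by linarith
  have hr0 : 0 < r := lt_of_lt_of_le h0 hr
  set S : Set (ℝ × ℝ) := (({p : ℝ × ℝ | 0 ≤ p.1 ∧ p.1 ≤ r ∧ |p.2| ≤ W / 2} ∪
        {p : ℝ × ℝ | (p.1 - r) ^ 2 + p.2 ^ 2 ≤ (W / 2) ^ 2 ∧ r ≤ p.1}) \
        {p : ℝ × ℝ | p.1 ^ 2 + p.2 ^ 2 ≤ rin ^ 2}) with hS
  set f : ℝ → ℝ := fun y => r + Real.sqrt ((W / 2) ^ 2 - y ^ 2) - Real.sqrt (rin ^ 2 - y ^ 2)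
    with hf
  have hSmeas : MeasurableSet S := by
    rw [hS]
    apply MeasurableSet.diff
    · apply MeasurableSet.union
      · exact ((measurableSet_le measurable_const measurable_fst).inter
          ((measurableSet_le measurable_fst measurable_const).inter
           (measurableSet_le measurable_snd.abs measurable_const)))
      · exact ((measurableSet_le (((measurable_fst.sub measurable_const).pow_const 2).add
            (measurable_snd.pow_const 2)) measurable_const).inter
          (measurableSet_le measurable_const measurable_fst))
    · exact measurableSet_le ((measurable_fst.pow_const 2).add
        (measurable_snd.pow_const 2)) measurable_const
  -- slice description
  have hvol : ∀ y : ℝ, volume ((fun x => (x, y)) ⁻¹' S) =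
      Set.indicator (Icc (-(W / 2)) (W / 2)) (fun y => ENNReal.ofReal (f y)) y := by
    intro y
    by_cases hy : |y| ≤ W / 2
    · have hy' : y ∈ Icc (-(W / 2)) (W / 2) := by
        rw [mem_Icc]; exact abs_le.mp hy
      have hy2 : y ^ 2 ≤ (W / 2) ^ 2 := sq_le_sq' (abs_le.mp hy).1 (abs_le.mp hy).2
      have hry : 0 < rin ^ 2 - y ^ 2 := by nlinarith
      have hslice : ((fun x => (x, y)) ⁻¹' S) =
          Ioc (Real.sqrt (rin ^ 2 - y ^ 2)) (r + Real.sqrt ((W / 2) ^ 2 - y ^ 2)) := by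
        ext x
        simp only [hS, Set.mem_preimage, Set.mem_diff, Set.mem_union, Set.mem_setOf_eq,
          Set.mem_Ioc, not_le]
        constructor
        · rintro ⟨hmem, hdisk⟩
          have hx0 : 0 ≤ x := by
            rcases hmem with ⟨h, _⟩ | ⟨_, h⟩
            · exact h
            · linarith
          constructor
          · have h1 : rin ^ 2 - y ^ 2 < x ^ 2 := by linarith
            have := Real.sqrt_lt_sqrt hry.le h1
            rwa [Real.sqrt_sq hx0] at this
          · rcases hmem with ⟨_, hxr, _⟩ | ⟨hcap, hrx⟩
            · have := Real.sqrt_nonneg ((W / 2) ^ 2 - y ^ 2); linarith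
            · have h1 : (x - r) ^ 2 ≤ (W / 2) ^ 2 - y ^ 2 := by linarith
              have := Real.sqrt_le_sqrt h1
              rw [Real.sqrt_sq (by linarith : (0:ℝ) ≤ x - r)] at this
              linarith
        · rintro ⟨hlo, hhi⟩
          have hs0 : 0 < Real.sqrt (rin ^ 2 - y ^ 2) := Real.sqrt_pos.mpr hry
          have hx0 : 0 < x := lt_trans hs0 hlo
          have hdisk : rin ^ 2 - y ^ 2 < x ^ 2 := by
            have := (Real.sqrt_lt' hx0).mp hlo
            linarith
          refine ⟨?_, by linarith⟩
          by_cases hxr : x ≤ r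
          · exact Or.inl ⟨hx0.le, hxr, hy⟩
          · refine Or.inr ⟨?_, by linarith⟩
            have h1 : x - r ≤ Real.sqrt ((W / 2) ^ 2 - y ^ 2) := by linarith
            have h2 : (x - r) ^ 2 ≤ Real.sqrt ((W / 2) ^ 2 - y ^ 2) ^ 2 :=
              pow_le_pow_left₀ (by linarith) h1 2
            rw [Real.sq_sqrt (by linarith : (0:ℝ) ≤ (W / 2) ^ 2 - y ^ 2)] at h2
            linarith
      rw [hslice, Set.indicator_of_mem hy', Real.volume_Ioc]
    · have hempty : ((fun x => (x, y)) ⁻¹' S) = (∅ : Set ℝ) := by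
        ext x
        simp only [hS, Set.mem_preimage, Set.mem_diff, Set.mem_union, Set.mem_setOf_eq,
          Set.mem_empty_iff_false, iff_false, not_and, not_not]
        rintro (⟨_, _, hy'⟩ | ⟨hcap, _⟩)
        · exact absurd hy' hy
        · exfalso
          apply hy
          have h1 : y ^ 2 ≤ (W / 2) ^ 2 := by nlinarith [sq_nonneg (x - r)]
          have := Real.sqrt_le_sqrt h1
          rwa [Real.sqrt_sq_eq_abs, Real.sqrt_sq ha.le] at this
      rw [hempty, Set.indicator_of_notMem (by rwa [mem_Icc, ← abs_le]), measure_empty]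
  -- nonnegativity and integrability of f
  have hfnn : ∀ y : ℝ, 0 ≤ f y := by
    intro y
    have h1 : Real.sqrt (rin ^ 2 - y ^ 2) ≤ rin := by
      have := Real.sqrt_le_sqrt (by nlinarith : rin ^ 2 - y ^ 2 ≤ rin ^ 2)
      rwa [Real.sqrt_sq h0.le] at this
    have h2 : 0 ≤ Real.sqrt ((W / 2) ^ 2 - y ^ 2) := Real.sqrt_nonneg _
    simp only [hf]
    linarith
  have hfcont : Continuous f := by
    apply Continuous.sub
    · exact continuous_const.add ((continuous_const.sub (continuous_pow 2)).sqrt)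
    · exact (continuous_const.sub (continuous_pow 2)).sqrt
  -- main computation
  rw [Measure.volume_eq_prod, Measure.prod_apply_symm hSmeas]
  rw [lintegral_congr hvol, lintegral_indicator measurableSet_Icc]
  rw [← MeasureTheory.ofReal_integral_eq_lintegral_ofReal
      (hfcont.integrableOn_Icc) (Filter.Eventually.of_forall hfnn)]
  congr 1
  have hIcc : ∫ y in Icc (-(W / 2)) (W / 2), f y = ∫ y in (-(W / 2))..(W / 2), f y := by
    rw [intervalIntegral.integral_of_le (by linarith), MeasureTheory.integral_Icc_eq_integral_Ioc]
  rw [hIcc]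
  have hint1 : IntervalIntegrable (fun y : ℝ => r + Real.sqrt ((W / 2) ^ 2 - y ^ 2))
      volume (-(W / 2)) (W / 2) :=
    (continuous_const.add ((continuous_const.sub (continuous_pow 2)).sqrt)).intervalIntegrable _ _
  have hint2 : IntervalIntegrable (fun y : ℝ => Real.sqrt (rin ^ 2 - y ^ 2))
      volume (-(W / 2)) (W / 2) :=
    ((continuous_const.sub (continuous_pow 2)).sqrt).intervalIntegrable _ _
  have hsplit : ∫ y in (-(W / 2))..(W / 2), f y =
      (∫ y in (-(W / 2))..(W / 2), (r + Real.sqrt ((W / 2) ^ 2 - y ^ 2))) -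
      ∫ y in (-(W / 2))..(W / 2), Real.sqrt (rin ^ 2 - y ^ 2) := by
    rw [← intervalIntegral.integral_sub hint1 hint2]
  rw [hsplit]
  have hint3 : IntervalIntegrable (fun y : ℝ => Real.sqrt ((W / 2) ^ 2 - y ^ 2))
      volume (-(W / 2)) (W / 2) :=
    ((continuous_const.sub (continuous_pow 2)).sqrt).intervalIntegrable _ _
  have hcap : ∫ y in (-(W / 2))..(W / 2), Real.sqrt ((W / 2) ^ 2 - y ^ 2) = π * W ^ 2 / 8 := by
    have heq : ∀ y : ℝ, Real.sqrt ((W / 2) ^ 2 - y ^ 2) =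
        (W / 2) * Real.sqrt (1 - (y / (W / 2)) ^ 2) := by
      intro y
      have h1 : (W / 2) ^ 2 - y ^ 2 = (W / 2) ^ 2 * (1 - (y / (W / 2)) ^ 2) := by
        field_simp
      rw [h1, Real.sqrt_mul (sq_nonneg _), Real.sqrt_sq ha.le]
    simp only [heq]
    rw [intervalIntegral.integral_const_mul]
    have h2 : (∫ y in (-(W / 2))..(W / 2), Real.sqrt (1 - (y / (W / 2)) ^ 2)) =
        (W / 2) • ∫ x in ((-(W / 2)) / (W / 2))..((W / 2) / (W / 2)), Real.sqrt (1 - x ^ 2) :=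
      intervalIntegral.integral_comp_div (fun x => Real.sqrt (1 - x ^ 2)) (ne_of_gt ha)
    have h3 : (-(W / 2)) / (W / 2) = (-1 : ℝ) := by
      rw [neg_div, div_self (ne_of_gt ha)]
    have h4 : (W / 2) / (W / 2) = (1 : ℝ) := div_self (ne_of_gt ha)
    rw [h2, h3, h4, integral_sqrt_one_sub_sq, smul_eq_mul]
    ring
  have hlens : ∫ y in (-(W / 2))..(W / 2), Real.sqrt (rin ^ 2 - y ^ 2) =
      (W / 2) * Real.sqrt (rin ^ 2 - (W / 2) ^ 2) + rin ^ 2 * Real.arcsin (W / (2 * rin)) := by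
    have hderiv : ∀ y ∈ Set.uIcc (-(W / 2)) (W / 2),
        HasDerivAt (fun t => t / 2 * Real.sqrt (rin ^ 2 - t ^ 2) +
          rin ^ 2 / 2 * Real.arcsin (t / rin)) (Real.sqrt (rin ^ 2 - y ^ 2)) y := by
      intro y hy
      rw [Set.uIcc_of_le (by linarith)] at hy
      obtain ⟨hy1, hy2⟩ := hy
      have hpos : 0 < rin ^ 2 - y ^ 2 := by nlinarith
      set s := Real.sqrt (rin ^ 2 - y ^ 2) with hs
      have hspos : 0 < s := Real.sqrt_pos.mpr hpos
      have hssq : s ^ 2 = rin ^ 2 - y ^ 2 := Real.sq_sqrt hpos.le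
      have d1 : HasDerivAt (fun t : ℝ => rin ^ 2 - t ^ 2) (-(2 * y)) y := by
        simpa using (hasDerivAt_pow 2 y).const_sub (rin ^ 2)
      have d2 : HasDerivAt (fun t : ℝ => Real.sqrt (rin ^ 2 - t ^ 2))
          (1 / (2 * s) * (-(2 * y))) y := by
        simpa [Function.comp_def, hs] using
          (Real.hasDerivAt_sqrt (ne_of_gt hpos)).comp y d1
      have d3 : HasDerivAt (fun t : ℝ => t / 2 * Real.sqrt (rin ^ 2 - t ^ 2))
          (1 / 2 * s + y / 2 * (1 / (2 * s) * (-(2 * y)))) y := by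
        exact (((hasDerivAt_id y).div_const 2).mul d2).congr_deriv (by simp [hs])
      have hne1 : y / rin ≠ -1 := by
        intro h
        rw [div_eq_iff (ne_of_gt h0)] at h
        nlinarith
      have hne2 : y / rin ≠ 1 := by
        intro h
        rw [div_eq_iff (ne_of_gt h0)] at h
        nlinarith
      have d4 : HasDerivAt (fun t : ℝ => Real.arcsin (t / rin))
          (1 / Real.sqrt (1 - (y / rin) ^ 2) * (1 / rin)) y := by
        simpa [Function.comp_def] using
          (Real.hasDerivAt_arcsin hne1 hne2).comp y ((hasDerivAt_id y).div_const rin)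
      have d5 : HasDerivAt (fun t : ℝ => rin ^ 2 / 2 * Real.arcsin (t / rin))
          (rin ^ 2 / 2 * (1 / Real.sqrt (1 - (y / rin) ^ 2) * (1 / rin))) y :=
        d4.const_mul (rin ^ 2 / 2)
      have hsq1 : Real.sqrt (1 - (y / rin) ^ 2) = s / rin := by
        have h1 : 1 - (y / rin) ^ 2 = (rin ^ 2 - y ^ 2) / rin ^ 2 := by
          field_simp
        rw [h1, Real.sqrt_div hpos.le, Real.sqrt_sq h0.le]
      have := d3.add d5
      refine this.congr_deriv ?_
      rw [hsq1, one_div_div]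
      have hsne : s ≠ 0 := ne_of_gt hspos
      have hrne : rin ≠ 0 := ne_of_gt h0
      clear_value s
      have h2 : y / 2 * (1 / (2 * s) * -(2 * y)) = -(y ^ 2) / (2 * s) := by ring
      have h3 : rin ^ 2 / 2 * (rin / s * (1 / rin)) = rin ^ 3 * (1 / rin) / (2 * s) := by ring
      have h4 : rin ^ 3 * (1 / rin) = rin ^ 2 := by
        rw [mul_one_div, pow_succ, mul_div_assoc, div_self hrne, mul_one]
      rw [h2, h3, h4, add_assoc, ← add_div]
      have h5 : -(y ^ 2) + rin ^ 2 = s ^ 2 := by rw [hssq]; ring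
      rw [h5]
      have h6 : s ^ 2 / (2 * s) = s / 2 := by
        rw [sq, mul_comm 2 s, mul_div_mul_left _ _ hsne]
      rw [h6]
      ring
    rw [intervalIntegral.integral_eq_sub_of_hasDerivAt hderiv hint2]
    have e1 : (-(W / 2) : ℝ) ^ 2 = (W / 2) ^ 2 := by ring
    have e2 : (-(W / 2)) / rin = -((W / 2) / rin) := by ring
    rw [e1, e2, Real.arcsin_neg]
    have e3 : (W / 2) / rin = W / (2 * rin) := by ring
    rw [e3]
    ring
  rw [intervalIntegral.integral_add (intervalIntegrable_const) hint3, hcap, hlens,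
    intervalIntegral.integral_const, smul_eq_mul]
  ring
end
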